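/- If the sequence (a_n) of partial quotients of α is unbounded, then there exists a sequence of positive integers t_n→+∞ such that t_n·X mod 1 converges in law to the Dirac mass at 0 on 𝕋; equivalently, for every positive integer m, P̂_X(m t_n)=∫_ℝ e^{2iπ m t_n x}dP_X(x) → 1 as n→∞. -/

import Mathlib

open MeasureTheory Filter Topology

/-- The random series `X(x) = ∑_{n≥0} r_n(x) b(x + nα)` above the rotation by `α`,
where `r_n(x) = r(x) r(x+α) ⋯ r(x+(n−1)α)`; the circle is modelled as `ℝ` with
`1`-periodic data. -/
noncomputable def Xser (α : ℝ) (b r : ℝ → ℝ) (x : ℝ) : ℝ :=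
  ∑' n : ℕ, (∏ k ∈ Finset.range n, r (x + k * α)) * b (x + n * α)

/-- The arc `[d_i, d_{i+1})` of the circle (cyclically: the last arc is `[d_{N-1}, d_0 + 1)`),
viewed in `ℝ`. -/
def arc {N : ℕ} [NeZero N] (d : Fin N → ℝ) (i : Fin N) : Set ℝ :=
  if (i : ℕ) + 1 = N then Set.Ico (d i) (d (i + 1) + 1) else Set.Ico (d i) (d (i + 1))

/-- Iterates of the Gauss map `x ↦ {1/x}` starting from `α`. -/
noncomputable def gaussIter (α : ℝ) : ℕ → ℝ
  | 0 => α
  | n + 1 => Int.fract (1 / gaussIter α n)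

/-- The `(n+1)`-st partial quotient `a_{n+1}` of the continued fraction expansion
`α = [0; a_1, a_2, …]`: `a_{n+1} = ⌊1 / G^n(α)⌋` where `G` is the Gauss map. -/
noncomputable def partQuot (α : ℝ) (n : ℕ) : ℕ := ⌊1 / gaussIter α n⌋₊

set_option maxHeartbeats 1000000

section CF
open GenContFract

variable {α : ℝ}

lemma gaussIter_spec (hα : α ∈ Set.Ioo (0:ℝ) 1) (hirr : Irrational α) :
    ∀ n, gaussIter α n ∈ Set.Ioo (0:ℝ) 1 ∧ Irrational (gaussIter α n) := by
  intro n
  induction n with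
  | zero => exact ⟨hα, hirr⟩
  | succ n ih =>
    obtain ⟨⟨h0, h1⟩, hi⟩ := ih
    have hinv : Irrational (1 / gaussIter α n) := by rw [one_div]; exact hi.inv
    have hfr : Irrational (gaussIter α (n+1)) := by
      show Irrational (Int.fract _)
      unfold Int.fract
      exact hinv.sub_intCast _
    refine ⟨⟨?_, Int.fract_lt_one _⟩, hfr⟩
    exact lt_of_le_of_ne (Int.fract_nonneg _) (Ne.symm hfr.ne_zero)

lemma stream_gauss (hα : α ∈ Set.Ioo (0:ℝ) 1) (hirr : Irrational α) :
    ∀ n, ∃ z : ℤ, GenContFract.IntFractPair.stream α n = some ⟨z, gaussIter α n⟩ := by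
  intro n
  induction n with
  | zero =>
    refine ⟨0, ?_⟩
    have h1 : ⌊α⌋ = 0 := by
      rw [Int.floor_eq_zero_iff]; exact ⟨hα.1.le, hα.2⟩
    have h2 : Int.fract α = α := Int.fract_eq_self.2 ⟨hα.1.le, hα.2⟩
    simp [GenContFract.IntFractPair.stream, GenContFract.IntFractPair.of, h1, h2, gaussIter]
  | succ n ih =>
    obtain ⟨z, hz⟩ := ih
    have hne : gaussIter α n ≠ 0 := ((gaussIter_spec hα hirr n).2).ne_zero
    refine ⟨⌊(gaussIter α n)⁻¹⌋, ?_⟩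
    rw [show gaussIter α (n+1) = Int.fract (1 / gaussIter α n) from rfl]
    simp [GenContFract.IntFractPair.stream, hz, hne, GenContFract.IntFractPair.of, one_div]

lemma stream_succ_gauss (hα : α ∈ Set.Ioo (0:ℝ) 1) (hirr : Irrational α) (n : ℕ) :
    GenContFract.IntFractPair.stream α (n+1)
      = some ⟨((partQuot α n : ℤ)), gaussIter α (n+1)⟩ := by
  obtain ⟨z, hz⟩ := stream_gauss hα hirr n
  have hne : gaussIter α n ≠ 0 := ((gaussIter_spec hα hirr n).2).ne_zero
  have hcast : ((partQuot α n : ℤ)) = ⌊(gaussIter α n)⁻¹⌋ := by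
    have h0 : (0:ℝ) ≤ (gaussIter α n)⁻¹ := by
      have := (gaussIter_spec hα hirr n).1.1
      positivity
    rw [partQuot, one_div, Int.natCast_floor_eq_floor h0]
  rw [hcast, show gaussIter α (n+1) = Int.fract (1 / gaussIter α n) from rfl]
  simp [GenContFract.IntFractPair.stream, hz, hne, GenContFract.IntFractPair.of, one_div]

lemma not_terminatedAt (hirr : Irrational α) (n : ℕ) :
    ¬(GenContFract.of α).TerminatedAt n := by
  intro h
  have hterm : (GenContFract.of α).Terminates := ⟨n, h⟩
  obtain ⟨q, hq⟩ := (terminates_iff_rat α).1 hterm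
  exact hirr.ne_rat q hq

lemma partDen_gauss (hα : α ∈ Set.Ioo (0:ℝ) 1) (hirr : Irrational α) (n : ℕ) :
    (GenContFract.of α).partDens.get? n = some ((partQuot α n : ℝ)) := by
  have h := GenContFract.get?_of_eq_some_of_succ_get?_intFractPair_stream
    (stream_succ_gauss hα hirr n)
  have := partDen_eq_s_b h
  simpa using this

lemma conts_int (hirr : Irrational α) :
    ∀ n, (∃ a bb : ℤ, (GenContFract.of α).contsAux n = ⟨(a:ℝ), (bb:ℝ)⟩)
      ∧ (∃ a bb : ℤ, (GenContFract.of α).contsAux (n+1) = ⟨(a:ℝ), (bb:ℝ)⟩) := by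
  intro n
  induction n with
  | zero =>
    constructor
    · exact ⟨1, 0, by rw [zeroth_contAux_eq_one_zero]; norm_num⟩
    · refine ⟨⌊α⌋, 1, ?_⟩
      rw [first_contAux_eq_h_one, of_h_eq_floor]
      norm_num
  | succ n ih =>
    refine ⟨ih.2, ?_⟩
    obtain ⟨⟨a0, b0, h0⟩, ⟨a1, b1, h1⟩⟩ := ih
    have hnt : ¬(GenContFract.of α).TerminatedAt n := not_terminatedAt hirr n
    obtain ⟨gp, hgp⟩ : ∃ gp, (GenContFract.of α).s.get? n = some gp :=
      Option.ne_none_iff_exists'.1 hnt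
    have ha : gp.a = 1 := of_partNum_eq_one (partNum_eq_s_a hgp)
    obtain ⟨z, hb⟩ := (of_partNum_eq_one_and_exists_int_partDen_eq hgp).2
    have hrec := contsAux_recurrence hgp h0 h1
    refine ⟨z * a1 + a0, z * b1 + b0, ?_⟩
    rw [hrec, ha, hb]
    have : ((z:ℝ) * a1 + 1 * a0) = ((z * a1 + a0 : ℤ) : ℝ) := by push_cast; ring
    have h2 : ((z:ℝ) * b1 + 1 * b0) = ((z * b1 + b0 : ℤ) : ℝ) := by push_cast; ring
    simp only [this, h2]

lemma dens_nat (hirr : Irrational α) (n : ℕ) :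
    ∃ q : ℕ, 0 < q ∧ (GenContFract.of α).dens n = (q:ℝ) := by
  obtain ⟨a, bb, h⟩ := (conts_int hirr n).2
  have hd : (GenContFract.of α).dens n = (bb:ℝ) := by
    rw [den_eq_conts_b, nth_cont_eq_succ_nth_contAux, h]
  have h1 : (1:ℝ) ≤ (GenContFract.of α).dens n := by
    have : ∀ m, (1:ℝ) ≤ (GenContFract.of α).dens m := by
      intro m
      induction m with
      | zero => rw [zeroth_den_eq_one]
      | succ m ih => exact ih.trans of_den_mono
    exact this n
  refine ⟨bb.toNat, ?_, ?_⟩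
  · have : (0:ℝ) < bb := lt_of_lt_of_le one_pos (hd ▸ h1)
    have hbb : (0:ℤ) < bb := by exact_mod_cast this
    omega
  · rw [hd]
    congr 1
    exact (Int.toNat_of_nonneg (by exact_mod_cast (zero_le_one.trans (hd ▸ h1)))).symm

lemma nums_int (hirr : Irrational α) (n : ℕ) :
    ∃ p : ℤ, (GenContFract.of α).nums n = (p:ℝ) := by
  obtain ⟨a, bb, h⟩ := (conts_int hirr n).2
  exact ⟨a, by rw [num_eq_conts_a, nth_cont_eq_succ_nth_contAux, h]⟩

lemma dioph (hα : α ∈ Set.Ioo (0:ℝ) 1) (hirr : Irrational α)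
    (hunb : ∀ B : ℕ, ∃ n : ℕ, B < partQuot α n)
    (A : ℝ) (hA : 0 < A) :
    ∃ (q : ℕ) (p : ℤ), 0 < q ∧ |(q:ℝ) * α - p| ≤ 1 / (A * q) := by
  obtain ⟨n, hn⟩ := hunb ⌈A⌉₊
  set g := GenContFract.of α with hg
  obtain ⟨q, hq0, hqd⟩ := dens_nat hirr n
  obtain ⟨p, hp⟩ := nums_int hirr n
  refine ⟨q, p, hq0, ?_⟩
  have hAq : (A : ℝ) ≤ partQuot α n := by
    calc (A:ℝ) ≤ ⌈A⌉₊ := Nat.le_ceil A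
    _ ≤ partQuot α n := by exact_mod_cast hn.le
  have hdlarge : A * q ≤ g.dens (n+1) := by
    have h1 : ((partQuot α n : ℝ)) * g.dens n ≤ g.dens (n+1) :=
      le_of_succ_get?_den (partDen_gauss hα hirr n)
    calc A * q ≤ (partQuot α n : ℝ) * q := by
          apply mul_le_mul_of_nonneg_right hAq (by positivity)
    _ = (partQuot α n : ℝ) * g.dens n := by rw [hqd]
    _ ≤ g.dens (n+1) := h1
  have habs : |α - g.convs n| ≤ 1 / (g.dens n * g.dens (n+1)) :=
    abs_sub_convs_le (not_terminatedAt hirr n)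
  have hq0' : (0:ℝ) < q := by exact_mod_cast hq0
  have hdpos : (0:ℝ) < g.dens (n+1) := lt_of_lt_of_le (by positivity) hdlarge
  have hconv : g.convs n = (p:ℝ) / q := by
    rw [conv_eq_num_div_den, hp, hqd]
  have key : |(q:ℝ) * α - p| = q * |α - g.convs n| := by
    rw [hconv, ← abs_of_pos hq0', ← abs_mul]
    rw [abs_of_pos hq0']
    congr 1
    rw [mul_sub, mul_div_cancel₀ _ hq0'.ne']
  rw [key]
  calc (q:ℝ) * |α - g.convs n| ≤ q * (1 / (q * g.dens (n+1))) := by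
        apply mul_le_mul_of_nonneg_left _ hq0'.le
        calc |α - g.convs n| ≤ 1 / (g.dens n * g.dens (n+1)) := habs
        _ = 1 / (q * g.dens (n+1)) := by rw [hqd]
  _ = 1 / g.dens (n+1) := by field_simp
  _ ≤ 1 / (A * q) := one_div_le_one_div_of_le (by positivity) hdlarge


section Arcs

variable {N : ℕ} [NeZero N] {d : Fin N → ℝ}

/-- The upper endpoint of an arc. -/
noncomputable def arcHi (d : Fin N → ℝ) (i : Fin N) : ℝ :=
  if (i : ℕ) + 1 = N then d 0 + 1 else d (i + 1)

lemma fin_wrap {i : Fin N} (h : (i : ℕ) + 1 = N) : i + 1 = 0 := by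
  apply Fin.ext
  simp [Fin.add_def, Fin.val_one', h]

lemma fin_nowrap {i : Fin N} (h : (i : ℕ) + 1 ≠ N) : ((i + 1 : Fin N) : ℕ) = (i : ℕ) + 1 := by
  have hi := i.isLt
  have hN2 : 2 ≤ N := by omega
  have h1 : (1 : Fin N).val = 1 := by rw [Fin.val_one']; exact Nat.mod_eq_of_lt hN2
  rw [Fin.add_def, h1]
  exact Nat.mod_eq_of_lt (by omega)

lemma arc_eq (i : Fin N) : arc d i = Set.Ico (d i) (arcHi d i) := by
  unfold arc arcHi
  split_ifs with h
  · rw [fin_wrap h]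
  · rfl

lemma fin_lt_add_one {i : Fin N} (h : (i : ℕ) + 1 ≠ N) : i < i + 1 := by
  have := fin_nowrap h
  rw [Fin.lt_def, this]
  omega

variable (hd : StrictMono d) (hdmem : ∀ i, d i ∈ Set.Ico (0:ℝ) 1)

include hd hdmem

lemma lt_arcHi (i : Fin N) : d i < arcHi d i := by
  unfold arcHi
  split_ifs with h
  · have := (hdmem i).2
    have := (hdmem 0).1
    linarith
  · exact hd (fin_lt_add_one h)

lemma d_mem_arc (i : Fin N) : d i ∈ arc d i := by
  rw [arc_eq]
  exact ⟨le_refl _, lt_arcHi hd hdmem i⟩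

lemma arcHi_le (i : Fin N) : arcHi d i ≤ d 0 + 1 := by
  unfold arcHi
  split_ifs with h
  · exact le_refl _
  · have := (hdmem (i+1)).2
    have := (hdmem 0).1
    linarith

lemma arc_subset (i : Fin N) : arc d i ⊆ Set.Ico (d 0) (d 0 + 1) := by
  rw [arc_eq]
  intro x hx
  exact ⟨le_trans (hd.monotone (by rw [Fin.le_def]; simp)) hx.1, lt_of_lt_of_le hx.2 (arcHi_le hd hdmem i)⟩

lemma arcHi_form (i : Fin N) : ∃ (j : Fin N) (z : ℤ), arcHi d i = d j + z := by
  unfold arcHi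
  split_ifs with h
  · exact ⟨0, 1, by norm_num⟩
  · exact ⟨i + 1, 0, by norm_num⟩

lemma arc_cover (y : ℝ) : ∃ (i : Fin N) (z : ℤ), y - (z : ℝ) ∈ arc d i := by
  have hN : 0 < N := Nat.pos_of_ne_zero (NeZero.ne N)
  set u := d 0 + Int.fract (y - d 0) with hu
  have hu0 : d 0 ≤ u := by
    have := Int.fract_nonneg (y - d 0); linarith
  have hu1 : u < d 0 + 1 := by
    have := Int.fract_lt_one (y - d 0); linarith
  have huy : y - (⌊y - d 0⌋ : ℝ) = u := by
    rw [hu, Int.fract]; ring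
  set s := Finset.univ.filter (fun i : Fin N => d i ≤ u) with hs
  have hsne : s.Nonempty := ⟨0, by simp [hs, hu0]⟩
  set i := s.max' hsne with hi
  have hmem : d i ≤ u := by
    have := s.max'_mem hsne
    simp [hs] at this
    exact this
  refine ⟨i, ⌊y - d 0⌋, ?_⟩
  rw [huy, arc_eq]
  refine ⟨hmem, ?_⟩
  by_contra hcon
  push_neg at hcon
  unfold arcHi at hcon
  split_ifs at hcon with h
  · linarith
  · have : (i + 1) ∈ s := by simp [hs]; linarith
    have := Finset.le_max' s _ this
    exact absurd (lt_of_lt_of_le (fin_lt_add_one h) this) (lt_irrefl _)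

lemma arc_disj {i j : Fin N} (hij : i < j) {u : ℝ} (hiu : u ∈ arc d i) (hju : u ∈ arc d j) :
    False := by
  rw [arc_eq] at hiu hju
  have hnw : (i : ℕ) + 1 ≠ N := by
    have := j.isLt
    have := hij
    rw [Fin.lt_def] at this
    omega
  have h1 : u < arcHi d i := hiu.2
  have h2 : arcHi d i = d (i + 1) := by unfold arcHi; rw [if_neg hnw]
  have h3 : d (i + 1) ≤ d j := hd.monotone (by rw [Fin.le_def, fin_nowrap hnw]; rw [Fin.lt_def] at hij; omega)
  have h4 : d j ≤ u := hju.1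
  linarith

lemma arc_unique {y : ℝ} {i₁ i₂ : Fin N} {z₁ z₂ : ℤ}
    (h1 : y - (z₁ : ℝ) ∈ arc d i₁) (h2 : y - (z₂ : ℝ) ∈ arc d i₂) : z₁ = z₂ ∧ i₁ = i₂ := by
  have m1 := arc_subset hd hdmem i₁ h1
  have m2 := arc_subset hd hdmem i₂ h2
  have hz : z₁ = z₂ := by
    have a1 := m1.1; have a2 := m1.2; have a3 := m2.1; have a4 := m2.2
    have : |(z₁ : ℝ) - z₂| < 1 := by
      rw [abs_lt]; constructor <;> linarith
    have : ((z₁ - z₂ : ℤ) : ℝ) = 0 ∨ |((z₁ - z₂ : ℤ) : ℝ)| ≥ 1 := by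
      rcases eq_or_ne (z₁ - z₂) 0 with h | h
      · left; rw [h]; norm_num
      · right
        have : (1:ℤ) ≤ |z₁ - z₂| := Int.one_le_abs (by exact h)
        calc (1:ℝ) ≤ ((|z₁ - z₂| : ℤ) : ℝ) := by exact_mod_cast this
        _ = |((z₁ - z₂ : ℤ) : ℝ)| := by rw [Int.cast_abs]
    rcases this with h | h
    · have : (z₁:ℝ) = z₂ := by push_cast at h; linarith
      exact_mod_cast this
    · push_cast at h this; linarith
  subst hz
  refine ⟨rfl, ?_⟩
  rcases lt_trichotomy i₁ i₂ with h | h | h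
  · exact absurd (arc_disj hd hdmem h h1 h2) not_false
  · exact h
  · exact absurd (arc_disj hd hdmem h h2 h1) not_false

variable {f : ℝ → ℝ} (hfper : Function.Periodic f 1)
  (hfconst : ∀ i : Fin N, ∀ x ∈ arc d i, ∀ y ∈ arc d i, f x = f y)

include hfper hfconst

lemma arc_val {y : ℝ} {i : Fin N} {z : ℤ} (h : y - (z : ℝ) ∈ arc d i) : f y = f (d i) := by
  have h1 : f (y - (z : ℝ)) = f y := by
    have := hfper.sub_int_mul_eq (x := y) (n := z)
    simpa using this
  rw [← h1]
  exact hfconst i _ h _ (d_mem_arc hd hdmem i)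

lemma piecewise_meas : Measurable f := by
  classical
  have harcZ : ∀ i : Fin N, MeasurableSet (⋃ z : ℤ, (fun y : ℝ => y - (z:ℝ)) ⁻¹' (arc d i)) := by
    intro i
    apply MeasurableSet.iUnion
    intro z
    apply MeasurableSet.preimage
    · rw [arc_eq]; exact measurableSet_Ico
    · exact measurable_id.sub_const _
  have hrepr : f = fun y => ∑ i : Fin N,
      Set.indicator (⋃ z : ℤ, (fun y : ℝ => y - (z:ℝ)) ⁻¹' (arc d i)) (fun _ => f (d i)) y := by
    funext y
    obtain ⟨i₀, z₀, hmem⟩ := arc_cover hd hdmem y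
    rw [Finset.sum_eq_single i₀]
    · rw [Set.indicator_of_mem (by exact Set.mem_iUnion.2 ⟨z₀, hmem⟩)]
      exact arc_val hd hdmem hfper hfconst hmem
    · intro j _ hj
      apply Set.indicator_of_notMem
      intro hmem2
      obtain ⟨z', hz'⟩ := Set.mem_iUnion.1 hmem2
      exact hj ((arc_unique hd hdmem hz' hmem).2)
    · intro h; exact absurd (Finset.mem_univ i₀) h
  rw [hrepr]
  exact Finset.measurable_sum _ (fun i _ => measurable_const.indicator (harcZ i))

omit hfper hfconst in
lemma arc_perturb {y₁ y₂ : ℝ} {i : Fin N} {z : ℤ} {η : ℝ}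
    (h1 : y₁ - (z : ℝ) ∈ arc d i) (hclose : |y₂ - y₁| ≤ η)
    (hfar : ∀ (j : Fin N) (w : ℤ), η < |y₁ - (d j + w)|) :
    y₂ - (z : ℝ) ∈ arc d i := by
  rw [arc_eq] at h1 ⊢
  obtain ⟨j, w, hw⟩ := arcHi_form hd hdmem i
  have habs := abs_le.1 hclose
  constructor
  · have := hfar i z
    have h2 : y₁ - (d i + z) ≥ 0 := by have := h1.1; linarith
    rw [abs_of_nonneg h2] at this
    linarith
  · have := hfar j (w + z)
    have h2 : y₁ - (d j + (w + z)) < 0 := by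
      have := h1.2
      rw [hw] at this
      push_cast
      linarith
    push_cast at this
    rw [abs_of_neg h2] at this
    rw [hw]
    linarith

end Arcs


section Series

variable {α : ℝ} {N : ℕ} [NeZero N] {d : Fin N → ℝ} {b r : ℝ → ℝ}

/-- max of `r` over arc representatives -/
noncomputable def cB {N : ℕ} [NeZero N] (d : Fin N → ℝ) (r : ℝ → ℝ) : ℝ :=
  Finset.univ.sup' Finset.univ_nonempty fun i => r (d i)

noncomputable def BB {N : ℕ} [NeZero N] (d : Fin N → ℝ) (b : ℝ → ℝ) : ℝ :=
  Finset.univ.sup' Finset.univ_nonempty fun i => |b (d i)|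

/-- one term of the series -/
noncomputable def trm (α : ℝ) (b r : ℝ → ℝ) (x : ℝ) (n : ℕ) : ℝ :=
  (∏ k ∈ Finset.range n, r (x + k * α)) * b (x + n * α)

lemma Xser_eq (x : ℝ) : Xser α b r x = ∑' n, trm α b r x n := rfl

variable (hd : StrictMono d) (hdmem : ∀ i, d i ∈ Set.Ico (0:ℝ) 1)
  (hbper : Function.Periodic b 1) (hrper : Function.Periodic r 1)
  (hr : ∀ x, r x ∈ Set.Ioo (0 : ℝ) 1)
  (hbconst : ∀ i : Fin N, ∀ x ∈ arc d i, ∀ y ∈ arc d i, b x = b y)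
  (hrconst : ∀ i : Fin N, ∀ x ∈ arc d i, ∀ y ∈ arc d i, r x = r y)

include hd hdmem hrper hr hrconst in
lemma r_le_cB (y : ℝ) : r y ≤ cB d r := by
  obtain ⟨i, z, h⟩ := arc_cover hd hdmem y
  rw [arc_val hd hdmem hrper hrconst h, cB]
  exact Finset.le_sup' (fun i => r (d i)) (Finset.mem_univ i)

include hr in
lemma cB_lt_one : cB d r < 1 := by
  rw [cB, Finset.sup'_lt_iff]
  exact fun i _ => (hr (d i)).2

include hr in
lemma cB_pos : 0 < cB d r := by
  rw [cB]
  exact lt_of_lt_of_le (hr (d 0)).1 (Finset.le_sup' (fun i => r (d i)) (Finset.mem_univ 0))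

include hd hdmem hbper hbconst in
lemma abs_b_le_BB (y : ℝ) : |b y| ≤ BB d b := by
  obtain ⟨i, z, h⟩ := arc_cover hd hdmem y
  rw [arc_val hd hdmem hbper hbconst h, BB]
  exact Finset.le_sup' (fun i => |b (d i)|) (Finset.mem_univ i)

include hd hdmem hrper hr hrconst in
lemma prod_r_le (x : ℝ) (n : ℕ) :
    (0 ≤ ∏ k ∈ Finset.range n, r (x + k * α)) ∧
      (∏ k ∈ Finset.range n, r (x + k * α)) ≤ cB d r ^ n := by
  constructor
  · exact Finset.prod_nonneg fun k _ => (hr _).1.le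
  · calc (∏ k ∈ Finset.range n, r (x + k * α)) ≤ ∏ _k ∈ Finset.range n, cB d r :=
        Finset.prod_le_prod (fun k _ => (hr _).1.le)
          (fun k _ => r_le_cB hd hdmem hrper hr hrconst _)
    _ = cB d r ^ n := by rw [Finset.prod_const, Finset.card_range]

include hd hdmem hbper hrper hr hbconst hrconst in
lemma trm_bound (x : ℝ) (n : ℕ) : |trm α b r x n| ≤ BB d b * cB d r ^ n := by
  rw [trm, abs_mul]
  obtain ⟨h0, h1⟩ := prod_r_le hd hdmem hrper hr hrconst (α := α) x n
  rw [abs_of_nonneg h0]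
  calc (∏ k ∈ Finset.range n, r (x + k * α)) * |b (x + n * α)|
      ≤ cB d r ^ n * BB d b := by
        apply mul_le_mul h1 (abs_b_le_BB hd hdmem hbper hbconst _) (abs_nonneg _)
        exact pow_nonneg (cB_pos hr).le n
  _ = BB d b * cB d r ^ n := by ring

include hd hdmem hbper hrper hr hbconst hrconst in
lemma trm_summable (x : ℝ) : Summable (trm α b r x) := by
  apply Summable.of_norm_bounded (g := fun n => BB d b * cB d r ^ n)
  · exact (summable_geometric_of_lt_one (cB_pos hr).le (cB_lt_one hr)).mul_left _
  · exact trm_bound hd hdmem hbper hrper hr hbconst hrconst x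

include hd hdmem hbper hrper hr hbconst hrconst in
lemma Xser_trunc (x : ℝ) (K : ℕ) :
    |Xser α b r x - ∑ k ∈ Finset.range K, trm α b r x k| ≤
      BB d b * cB d r ^ K / (1 - cB d r) := by
  have hsum := trm_summable hd hdmem hbper hrper hr hbconst hrconst (α := α) x
  have hsplit := hsum.sum_add_tsum_nat_add K
  rw [Xser_eq, ← hsplit]
  have heq : ∑ k ∈ Finset.range K, trm α b r x k + (∑' i, trm α b r x (i + K))
      - ∑ k ∈ Finset.range K, trm α b r x k = ∑' i, trm α b r x (i + K) := by ring
  rw [heq]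
  have hb2 : ∀ i : ℕ, |trm α b r x (i + K)| ≤ BB d b * cB d r ^ K * cB d r ^ i := by
    intro i
    calc |trm α b r x (i + K)| ≤ BB d b * cB d r ^ (i + K) :=
        trm_bound hd hdmem hbper hrper hr hbconst hrconst x (i + K)
    _ = BB d b * cB d r ^ K * cB d r ^ i := by rw [pow_add]; ring
  have hs2 : Summable (fun i => BB d b * cB d r ^ K * cB d r ^ i) :=
    (summable_geometric_of_lt_one (cB_pos hr).le (cB_lt_one hr)).mul_left _
  calc |∑' i, trm α b r x (i + K)| ≤ ∑' i, |trm α b r x (i + K)| := by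
        have hsn : Summable (fun i => |trm α b r x (i + K)|) :=
          Summable.of_nonneg_of_le (fun i => abs_nonneg _) hb2 hs2
        have := norm_tsum_le_tsum_norm (f := fun i => trm α b r x (i + K))
          (by simpa [Real.norm_eq_abs] using hsn)
        simpa [Real.norm_eq_abs] using this
  _ ≤ ∑' i, BB d b * cB d r ^ K * cB d r ^ i := by
        apply Summable.tsum_le_tsum hb2 _ hs2
        apply Summable.of_nonneg_of_le (fun i => abs_nonneg _) hb2 hs2
  _ = BB d b * cB d r ^ K * (1 - cB d r)⁻¹ := by
        rw [tsum_mul_left, tsum_geometric_of_lt_one (cB_pos hr).le (cB_lt_one hr)]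
  _ = BB d b * cB d r ^ K / (1 - cB d r) := by rw [div_eq_mul_inv]

lemma BB_nonneg : 0 ≤ BB d b :=
  le_trans (abs_nonneg (b (d 0)))
    (by rw [BB]; exact Finset.le_sup' (fun i => |b (d i)|) (Finset.mem_univ 0))

include hd hdmem hbper hrper hr hbconst hrconst in
lemma Xser_meas : Measurable (Xser α b r) := by
  have hbm : Measurable b := piecewise_meas hd hdmem hbper hbconst
  have hrm : Measurable r := piecewise_meas hd hdmem hrper hrconst
  have htm : ∀ n, Measurable (fun x => trm α b r x n) := by
    intro n
    apply Measurable.mul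
    · apply Finset.measurable_prod
      intro k _
      exact hrm.comp (measurable_id.add_const _)
    · exact hbm.comp (measurable_id.add_const _)
  apply measurable_of_tendsto_metrizable (f := fun n x => ∑ k ∈ Finset.range n, trm α b r x k)
  · intro n
    exact Finset.measurable_sum _ fun k _ => htm k
  · rw [tendsto_pi_nhds]
    intro x
    exact (trm_summable hd hdmem hbper hrper hr hbconst hrconst x).hasSum.tendsto_sum_nat

end Series


lemma floor_bucket {y1 y2 : ℝ} {D : ℕ} (hD : 0 < D)
    (h : ⌊Int.fract y1 * D⌋₊ = ⌊Int.fract y2 * D⌋₊) :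
    |Int.fract y1 - Int.fract y2| < 1 / D := by
  have hD' : (0:ℝ) < D := by exact_mod_cast hD
  have h1a : (⌊Int.fract y1 * D⌋₊ : ℝ) ≤ Int.fract y1 * D :=
    Nat.floor_le (mul_nonneg (Int.fract_nonneg _) hD'.le)
  have h1b : Int.fract y1 * D < ⌊Int.fract y1 * D⌋₊ + 1 := Nat.lt_floor_add_one _
  have h2a : (⌊Int.fract y2 * D⌋₊ : ℝ) ≤ Int.fract y2 * D :=
    Nat.floor_le (mul_nonneg (Int.fract_nonneg _) hD'.le)
  have h2b : Int.fract y2 * D < ⌊Int.fract y2 * D⌋₊ + 1 := Nat.lt_floor_add_one _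
  rw [h] at h1a h1b
  rw [lt_div_iff₀ hD']
  calc |Int.fract y1 - Int.fract y2| * D
      = |Int.fract y1 - Int.fract y2| * |(D:ℝ)| := by rw [abs_of_pos hD']
  _ = |(Int.fract y1 - Int.fract y2) * D| := (abs_mul _ _).symm
  _ = |Int.fract y1 * D - Int.fract y2 * D| := by ring_nf
  _ < 1 := by rw [abs_lt]; constructor <;> linarith

lemma dirichlet_simul (W : Finset ℝ) (S D : ℕ) (hS : 0 < S) (hD : 0 < D) :
    ∃ t : ℕ, S ≤ t ∧ t ≤ S * D ^ W.card ∧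
      ∀ w ∈ W, ∃ z : ℤ, |(t:ℝ) * w - z| ≤ 1 / D := by
  classical
  have hD' : (0:ℝ) < D := by exact_mod_cast hD
  set g : ℝ → Fin D := fun y => ⟨⌊Int.fract y * D⌋₊, by
    have h1 : Int.fract y * D < D := by
      have := Int.fract_lt_one y
      nlinarith [Int.fract_nonneg y]
    exact (Nat.floor_lt (mul_nonneg (Int.fract_nonneg y) hD'.le)).2 h1⟩ with hg
  set f : Fin (D ^ W.card + 1) → (↥W → Fin D) :=
    fun j w => g ((j : ℕ) * S * (w : ℝ)) with hf
  have hcard : Fintype.card (↥W → Fin D) < Fintype.card (Fin (D ^ W.card + 1)) := by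
    rw [Fintype.card_fun, Fintype.card_fin, Fintype.card_coe, Fintype.card_fin]
    omega
  obtain ⟨j1, j2, hne, heq⟩ := Fintype.exists_ne_map_eq_of_card_lt f hcard
  wlog hlt : (j1 : ℕ) < (j2 : ℕ) generalizing j1 j2
  · exact this j2 j1 hne.symm heq.symm (by omega)
  refine ⟨(j2 - j1 : ℕ) * S, ?_, ?_, ?_⟩
  · calc S = 1 * S := (one_mul S).symm
    _ ≤ (j2 - j1 : ℕ) * S := Nat.mul_le_mul_right S (by omega)
  · have : (j2:ℕ) - j1 ≤ D ^ W.card := by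
      have := j2.isLt
      omega
    calc ((j2:ℕ) - j1) * S ≤ D ^ W.card * S := Nat.mul_le_mul_right S this
    _ = S * D ^ W.card := Nat.mul_comm _ _
  · intro w hw
    have hfw := congrFun heq ⟨w, hw⟩
    rw [hf] at hfw
    simp only at hfw
    have hval : ⌊Int.fract ((j1:ℕ) * S * w) * D⌋₊ = ⌊Int.fract ((j2:ℕ) * S * w) * D⌋₊ := by
      have := congrArg Fin.val hfw
      simpa [hg] using this
    have hbucket := floor_bucket hD hval
    refine ⟨⌊((j2:ℕ) * S * w : ℝ)⌋ - ⌊((j1:ℕ) * S * w : ℝ)⌋, ?_⟩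
    have hsub : ((((j2:ℕ) - (j1:ℕ)) * S : ℕ) : ℝ) * w
        = ((j2:ℕ) * S * w : ℝ) - ((j1:ℕ) * S * w : ℝ) := by
      push_cast [Nat.cast_sub hlt.le]
      ring
    rw [hsub]
    have hfr : ((j2:ℕ) * S * w : ℝ) - ((j1:ℕ) * S * w : ℝ)
        - ((⌊((j2:ℕ) * S * w : ℝ)⌋ : ℤ) - ⌊((j1:ℕ) * S * w : ℝ)⌋ : ℤ)
        = Int.fract ((j2:ℕ) * S * w) - Int.fract ((j1:ℕ) * S * w) := by
      unfold Int.fract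
      push_cast
      ring
    rw [hfr]
    rw [abs_sub_comm] at hbucket
    exact hbucket.le


section Core

variable {α : ℝ} {N : ℕ} [NeZero N] {d : Fin N → ℝ} {b r : ℝ → ℝ}

theorem core (hα : α ∈ Set.Ioo (0 : ℝ) 1) (hirr : Irrational α)
    (hd : StrictMono d) (hdmem : ∀ i, d i ∈ Set.Ico (0 : ℝ) 1)
    (hbper : Function.Periodic b 1) (hrper : Function.Periodic r 1)
    (hr : ∀ x, r x ∈ Set.Ioo (0 : ℝ) 1)
    (hbconst : ∀ i : Fin N, ∀ x ∈ arc d i, ∀ y ∈ arc d i, b x = b y)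
    (hrconst : ∀ i : Fin N, ∀ x ∈ arc d i, ∀ y ∈ arc d i, r x = r y)
    (hunb : ∀ B : ℕ, ∃ n : ℕ, B < partQuot α n)
    (ε : ℝ) (hε0 : 0 < ε) (hε1 : ε ≤ 1) (S : ℕ) :
    ∃ t : ℕ, S ≤ t ∧ 1 ≤ t ∧ ∃ E : Set ℝ, MeasurableSet E ∧
      volume E ≤ ENNReal.ofReal ε ∧
      ∀ x ∈ Set.Ico (0:ℝ) 1 \ E, ∃ z : ℤ, |(t:ℝ) * Xser α b r x - z| ≤ 2 * ε := by
  classical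
  set c := cB d r with hc
  set B := BB d b with hB
  have hc0 : 0 < c := cB_pos hr
  have hc1 : c < 1 := cB_lt_one hr
  have hB0 : 0 ≤ B := BB_nonneg (d := d) (b := b)
  have h1c : 0 < 1 - c := by linarith
  -- parameters
  set S' := max S 1 with hS'def
  have hS' : 0 < S' := lt_of_lt_of_le one_pos (le_max_right _ _)
  set D := ⌈1/ε⌉₊ with hDdef
  have hD : 0 < D := Nat.ceil_pos.2 (by positivity)
  have hD1 : (1:ℝ) ≤ D := by exact_mod_cast hD
  have hDε : 1 / (D:ℝ) ≤ ε := by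
    rw [div_le_iff₀ (by positivity)]
    have h1 : 1/ε ≤ (D:ℝ) := Nat.le_ceil _
    calc (1:ℝ) = ε * (1/ε) := by field_simp
    _ ≤ ε * D := by apply mul_le_mul_of_nonneg_left h1 hε0.le
  set C0 := (B / (1 - c) + 1) * S' * (D:ℝ) ^ (N + 1) with hC0def
  have hC0pos : 0 < C0 := by
    apply mul_pos (mul_pos _ _) (by positivity)
    · positivity
    · exact_mod_cast hS'
  -- choose L
  obtain ⟨L0, hL0⟩ := exists_pow_lt_of_lt_one (show (0:ℝ) < ε / C0 by positivity) hc1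
  set L := L0 + 1 with hLdef
  have hL1 : 1 ≤ L := Nat.le_add_left 1 L0
  have hLc : c ^ L < ε / C0 := by
    calc c ^ L = c ^ L0 * c := by rw [pow_succ]
    _ ≤ c ^ L0 * 1 := by apply mul_le_mul_of_nonneg_left hc1.le (pow_nonneg hc0.le _)
    _ = c ^ L0 := mul_one _
    _ < ε / C0 := hL0
  have hLpos : (0:ℝ) < L := by exact_mod_cast hL1
  -- choose A
  set A := ⌈4 * N * L^2 / ε⌉₊ + 2 * L + 1 with hAdef
  have hA0 : (0:ℝ) < A := by positivity
  have hA2L : (2 * L : ℝ) < A := by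
    have : (2 * L : ℕ) < A := by omega
    exact_mod_cast this
  have hANL : 4 * N * L^2 / ε ≤ (A:ℝ) := by
    have h1 : (⌈4 * N * L^2 / ε⌉₊ : ℝ) ≤ (A:ℝ) := by
      have h2 : ⌈4 * N * L^2 / ε⌉₊ ≤ A := by rw [hAdef]; omega
      exact_mod_cast h2
    exact le_trans (Nat.le_ceil _) h1
  -- Diophantine approximation
  obtain ⟨q, p, hq0, hqp⟩ := dioph hα hirr hunb A hA0
  have hq0' : (0:ℝ) < q := by exact_mod_cast hq0
  set β := (p:ℝ) / q with hβdef
  have hαβ : |α - β| ≤ 1 / (A * q^2) := by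
    have h1 : |α - β| = |(q:ℝ) * α - p| / q := by
      rw [eq_div_iff hq0'.ne']
      have h2 : |α - β| * q = |(α - β) * q| := by
        rw [abs_mul, abs_of_pos hq0']
      rw [h2]
      congr 1
      rw [hβdef]
      field_simp
    rw [h1, div_le_div_iff₀ hq0' (by positivity)]
    calc |(q:ℝ) * α - p| * ((A:ℝ) * (q:ℝ)^2) ≤ (1 / ((A:ℝ) * q)) * ((A:ℝ) * (q:ℝ)^2) :=
          mul_le_mul_of_nonneg_right hqp (by positivity)
    _ = 1 * (q:ℝ) := by field_simp
  set K := L * q with hKdef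
  have hK0 : 0 < K := Nat.mul_pos (by omega) hq0
  set η := (L:ℝ) / (A * q) with hηdef
  have hη0 : 0 < η := by positivity
  have hη12 : η < 1/2 := by
    rw [hηdef, div_lt_iff₀ (by positivity)]
    have hq1 : (1:ℝ) ≤ q := by exact_mod_cast hq0
    nlinarith
  have hkclose : ∀ k : ℕ, k < K → |(k:ℝ) * β - k * α| ≤ η := by
    intro k hk
    have hk' : (k:ℝ) ≤ K := by exact_mod_cast hk.le
    calc |(k:ℝ) * β - k * α| = k * |α - β| := by
          rw [show (k:ℝ) * β - k * α = -((k:ℝ) * (α - β)) by ring, abs_neg, abs_mul,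
            abs_of_nonneg (k.cast_nonneg : (0:ℝ) ≤ (k:ℝ))]
    _ ≤ K * (1 / (A * q^2)) := by
          apply mul_le_mul hk' hαβ (abs_nonneg _) (by positivity)
    _ = η := by
          rw [hKdef, hηdef]
          push_cast
          field_simp
  -- the bad set
  set z0 : ℕ → Fin N → ℤ := fun k i => ⌈k * α - d i - η⌉ with hz0def
  set E : Set ℝ := ⋃ k ∈ Finset.range K, ⋃ i : Fin N,
      (Metric.closedBall (d i + z0 k i - k * α) η ∪
        Metric.closedBall (d i + (z0 k i + 1) - k * α) η) with hEdef
  have hEmeas : MeasurableSet E := by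
    apply MeasurableSet.biUnion (Finset.range K).countable_toSet
    intro k _
    apply MeasurableSet.iUnion
    intro i
    exact (measurableSet_closedBall.union measurableSet_closedBall)
  have hEvol : volume E ≤ ENNReal.ofReal ε := by
    have hball : ∀ (y : ℝ), volume (Metric.closedBall y η) = ENNReal.ofReal (2 * η) := by
      intro y; exact Real.volume_closedBall y η
    have h1 : volume E ≤ ∑ k ∈ Finset.range K, ∑ i : Fin N, ENNReal.ofReal (4 * η) := by
      calc volume E ≤ ∑ k ∈ Finset.range K, volume (⋃ i : Fin N,
          (Metric.closedBall (d i + z0 k i - k * α) η ∪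
            Metric.closedBall (d i + (z0 k i + 1) - k * α) η)) :=
          measure_biUnion_finset_le _ _
      _ ≤ ∑ k ∈ Finset.range K, ∑ i : Fin N, volume
          (Metric.closedBall (d i + z0 k i - k * α) η ∪
            Metric.closedBall (d i + (z0 k i + 1) - k * α) η) := by
          apply Finset.sum_le_sum
          intro k _
          exact measure_iUnion_fintype_le _ _
      _ ≤ ∑ k ∈ Finset.range K, ∑ i : Fin N, ENNReal.ofReal (4 * η) := by
          apply Finset.sum_le_sum; intro k _
          apply Finset.sum_le_sum; intro i _
          calc volume (Metric.closedBall (d i + z0 k i - k * α) η ∪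
                Metric.closedBall (d i + (z0 k i + 1) - k * α) η)
              ≤ volume (Metric.closedBall (d i + z0 k i - k * α) η)
                + volume (Metric.closedBall (d i + (z0 k i + 1) - k * α) η) :=
              measure_union_le _ _
          _ = ENNReal.ofReal (2 * η) + ENNReal.ofReal (2 * η) := by
              rw [Real.volume_closedBall, Real.volume_closedBall]
          _ = ENNReal.ofReal (4 * η) := by
              rw [← ENNReal.ofReal_add (by positivity) (by positivity)]
              congr 1
              ring
    calc volume E ≤ ∑ k ∈ Finset.range K, ∑ i : Fin N, ENNReal.ofReal (4 * η) := h1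
    _ = (K : ℕ) * ((N:ℕ) * ENNReal.ofReal (4 * η)) := by
        rw [Finset.sum_const, Finset.card_range, Finset.sum_const, Finset.card_univ,
          Fintype.card_fin, nsmul_eq_mul, nsmul_eq_mul]
    _ = ((K * N : ℕ) : ENNReal) * ENNReal.ofReal (4 * η) := by
        push_cast
        ring
    _ = ENNReal.ofReal ((K * N : ℕ) * (4 * η)) := by
        conv_rhs => rw [ENNReal.ofReal_mul (Nat.cast_nonneg _)]
        rw [ENNReal.ofReal_natCast]
    _ ≤ ENNReal.ofReal ε := by
        apply ENNReal.ofReal_le_ofReal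
        have hKq : ((K * N : ℕ):ℝ) = (L:ℝ) * q * N := by push_cast [hKdef]; ring
        rw [hKq, hηdef]
        have hcalc : (L:ℝ) * q * N * (4 * (L / (A * q))) = 4 * N * L^2 / A := by
          field_simp
        rw [hcalc]
        rw [div_le_iff₀ hA0]
        rw [div_le_iff₀ hε0] at hANL
        nlinarith
  -- far-from-endpoints property of good points
  have hx2η : 2 * η < 1 := by linarith
  have hgood : ∀ x, x ∈ Set.Ico (0:ℝ) 1 \ E → ∀ k : ℕ, k < K →
      ∀ (j : Fin N) (w : ℤ), η < |x + k * α - (d j + w)| := by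
    intro x hx k hk j w
    by_contra hcon
    push_neg at hcon
    apply hx.2
    rw [hEdef]
    have hx0 : (0:ℝ) ≤ x := hx.1.1
    have hx1 : x < 1 := hx.1.2
    have habs := abs_le.1 hcon
    have hwlow : z0 k j ≤ w := by
      rw [hz0def]
      apply Int.ceil_le.2
      push_cast
      linarith [habs.2]
    have hwhigh : w ≤ z0 k j + 1 := by
      have hz0ge : (k:ℝ) * α - d j - η ≤ (z0 k j : ℝ) := by
        rw [hz0def]; exact Int.le_ceil _
      have : (w:ℝ) < (z0 k j : ℝ) + 2 := by
        have h3 : (w:ℝ) ≤ x + k * α - d j + η := by linarith [habs.1]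
        linarith
      have h4 : (w:ℤ) < z0 k j + 2 := by exact_mod_cast this
      omega
    apply Set.mem_biUnion (by simp [Finset.mem_range, hk] :
      k ∈ ((Finset.range K : Finset ℕ) : Set ℕ))
    apply Set.mem_iUnion.2 ⟨j, ?_⟩
    rcases eq_or_lt_of_le hwhigh with heq | hlt
    · -- w = z0 + 1 : right ball
      apply Set.mem_union_right
      rw [Metric.mem_closedBall, Real.dist_eq]
      have harg : x - (d j + ((z0 k j : ℝ) + 1) - k * α) = x + k * α - (d j + w) := by
        have hw1 : (w:ℝ) = (z0 k j : ℝ) + 1 := by exact_mod_cast heq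
        rw [hw1]; ring
      rw [harg]; exact hcon
    · -- w = z0 : left ball
      have hw0 : w = z0 k j := by omega
      apply Set.mem_union_left
      rw [Metric.mem_closedBall, Real.dist_eq]
      have harg : x - (d j + (z0 k j : ℝ) - k * α) = x + k * α - (d j + w) := by
        rw [hw0]; ring
      rw [harg]; exact hcon
  -- on good points the orbit values agree with the rational rotation
  have hval : ∀ x, x ∈ Set.Ico (0:ℝ) 1 \ E → ∀ k, k < K →
      b (x + k * β) = b (x + k * α) ∧ r (x + k * β) = r (x + k * α) := by
    intro x hx k hk
    obtain ⟨i, z, hmem⟩ := arc_cover hd hdmem (x + k * α)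
    have hclose : |(x + k * β) - (x + k * α)| ≤ η := by
      have h2 : (x + k * β) - (x + k * α) = (k:ℝ) * β - k * α := by ring
      rw [h2]; exact hkclose k hk
    have hmem2 := arc_perturb hd hdmem hmem hclose (fun j w => hgood x hx k hk j w)
    exact ⟨by rw [arc_val hd hdmem hbper hbconst hmem2, arc_val hd hdmem hbper hbconst hmem],
      by rw [arc_val hd hdmem hrper hrconst hmem2, arc_val hd hdmem hrper hrconst hmem]⟩
  have hsum_eq : ∀ x, x ∈ Set.Ico (0:ℝ) 1 \ E →
      ∑ k ∈ Finset.range K, trm α b r x k = ∑ k ∈ Finset.range K, trm β b r x k := by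
    intro x hx
    apply Finset.sum_congr rfl
    intro k hk
    rw [Finset.mem_range] at hk
    unfold trm
    congr 1
    · apply Finset.prod_congr rfl
      intro j hj
      rw [Finset.mem_range] at hj
      exact ((hval x hx j (lt_trans hj hk)).2).symm
    · exact ((hval x hx k hk).1).symm
  -- finite set of values of the rational-rotation partial sums
  set P : Finset ℝ := ((Finset.range q) ×ˢ (Finset.univ : Finset (Fin N))).image
      (fun jz => Int.fract (d jz.2 - jz.1 * β)) with hPdef
  set P' : Finset ℝ := insert 0 P with hP'def
  set YK : ℝ → ℝ := fun x => ∑ k ∈ Finset.range K, trm β b r x k with hYKdef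
  set V : Finset ℝ := P'.image YK with hVdef
  have hVcard : V.card ≤ q * N + 1 := by
    have h3 : P.card ≤ q * N := by
      have h1 := Finset.card_image_le (s := (Finset.range q) ×ˢ (Finset.univ : Finset (Fin N)))
        (f := fun jz => Int.fract (d jz.2 - jz.1 * β))
      have h2 : ((Finset.range q) ×ˢ (Finset.univ : Finset (Fin N))).card = q * N := by
        rw [Finset.card_product, Finset.card_range, Finset.card_univ, Fintype.card_fin]
      rw [hPdef]
      omega
    calc V.card ≤ P'.card := Finset.card_image_le
    _ ≤ P.card + 1 := Finset.card_insert_le _ _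
    _ ≤ q * N + 1 := by omega
  have hq_ne : (q:ℝ) ≠ 0 := hq0'.ne'
  have hYmem : ∀ x ∈ Set.Ico (0:ℝ) 1, YK x ∈ V := by
    intro x hx
    have h0P' : (0:ℝ) ∈ P' := Finset.mem_insert_self _ _
    have hTne : (P'.filter (fun w => w ≤ x)).Nonempty :=
      ⟨0, Finset.mem_filter.2 ⟨h0P', hx.1⟩⟩
    obtain ⟨s, hsT, hsmax⟩ := Finset.exists_max_image (P'.filter (fun w => w ≤ x)) id hTne
    rw [Finset.mem_filter] at hsT
    obtain ⟨hsP', hsx⟩ := hsT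
    have hs0 : 0 ≤ s := by
      rcases Finset.mem_insert.1 hsP' with h | h
      · rw [h]
      · rw [hPdef] at h
        obtain ⟨jz, _, hjz⟩ := Finset.mem_image.1 h
        rw [← hjz]; exact Int.fract_nonneg _
    have hmax : ∀ w ∈ P', w ≤ x → w ≤ s := fun w hw hwx =>
      hsmax w (Finset.mem_filter.2 ⟨hw, hwx⟩)
    have hsame : ∀ k, k < K →
        b (x + k * β) = b (s + k * β) ∧ r (x + k * β) = r (s + k * β) := by
      intro k hk
      obtain ⟨i, z, hmem⟩ := arc_cover hd hdmem (s + k * β)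
      have hmem2 : (x + k * β) - (z:ℝ) ∈ arc d i := by
        rw [arc_eq] at hmem ⊢
        refine ⟨le_trans hmem.1 (by linarith [hsx]), ?_⟩
        by_contra hcon
        push_neg at hcon
        obtain ⟨j, w, hw⟩ := arcHi_form hd hdmem i
        set u : ℝ := d j + ((w + z : ℤ):ℝ) - k * β with hudef
        have hus : s < u := by
          have h5 := hmem.2
          rw [hw] at h5
          rw [hudef]; push_cast; linarith
        have hux : u ≤ x := by
          rw [hw] at hcon
          rw [hudef]; push_cast at hcon ⊢; linarith
        have hu01 : u ∈ Set.Ico (0:ℝ) 1 := ⟨le_trans hs0 hus.le, lt_of_le_of_lt hux hx.2⟩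
        have hufr : Int.fract u = u := Int.fract_eq_self.2 hu01
        obtain ⟨km, hkm⟩ : ∃ km : ℕ, km = k % q := ⟨_, rfl⟩
        obtain ⟨kd, hkd⟩ : ∃ kd : ℕ, kd = k / q := ⟨_, rfl⟩
        have hkq : ((km : ℕ):ℝ) + ((kd : ℕ):ℝ) * (q:ℝ) = (k:ℝ) := by
          rw [hkm, hkd]
          exact_mod_cast Nat.mod_add_div' k q
        have hsplit : (k:ℝ) * β = (km:ℝ) * β + (kd:ℝ) * (p:ℝ) := by
          rw [hβdef, ← hkq]; field_simp
        have hkdiff : u = (d j - (km:ℝ) * β) + (((w + z - (kd:ℤ) * p) : ℤ):ℝ) := by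
          rw [hudef]
          push_cast
          linarith [hsplit]
        have humem : u ∈ P := by
          rw [hPdef]
          apply Finset.mem_image.2
          refine ⟨(km, j), Finset.mem_product.2
            ⟨Finset.mem_range.2 (by rw [hkm]; exact Nat.mod_lt _ hq0), Finset.mem_univ _⟩, ?_⟩
          show Int.fract (d j - (km:ℝ) * β) = u
          rw [← hufr]
          conv_rhs => rw [hkdiff]
          rw [Int.fract_add_intCast]
        have : u ≤ s := hmax u (Finset.mem_insert_of_mem humem) hux
        linarith
      exact ⟨by rw [arc_val hd hdmem hbper hbconst hmem2, arc_val hd hdmem hbper hbconst hmem],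
        by rw [arc_val hd hdmem hrper hrconst hmem2, arc_val hd hdmem hrper hrconst hmem]⟩
    have hYKeq : YK x = YK s := by
      show (∑ k ∈ Finset.range K, trm β b r x k) = ∑ k ∈ Finset.range K, trm β b r s k
      apply Finset.sum_congr rfl
      intro k hk
      rw [Finset.mem_range] at hk
      unfold trm
      congr 1
      · apply Finset.prod_congr rfl
        intro j hj
        rw [Finset.mem_range] at hj
        exact (hsame j (lt_trans hj hk)).2
      · exact (hsame k hk).1
    rw [hYKeq, hVdef]
    exact Finset.mem_image_of_mem YK hsP'
  -- Dirichlet simultaneous approximation on the value set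
  obtain ⟨t, htS', htle, htV⟩ := dirichlet_simul V S' D hS' hD
  refine ⟨t, le_trans (le_max_left S 1) htS', le_trans (le_max_right S 1) htS',
    E, hEmeas, hEvol, ?_⟩
  intro x hx
  obtain ⟨z, hz⟩ := htV (YK x) (hYmem x hx.1)
  refine ⟨z, ?_⟩
  have htail : |Xser α b r x - YK x| ≤ B * c ^ K / (1 - c) := by
    have h1 := Xser_trunc hd hdmem hbper hrper hr hbconst hrconst (α := α) x K
    have h2 : YK x = ∑ k ∈ Finset.range K, trm β b r x k := rfl
    rw [h2, ← hsum_eq x hx]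
    exact h1
  have hτ0 : (0:ℝ) ≤ B * c ^ K / (1 - c) := by positivity
  have ht0 : (0:ℝ) ≤ t := Nat.cast_nonneg t
  have htre : (t:ℝ) ≤ (S':ℝ) * (D:ℝ) ^ (q * N + 1) := by
    have h2 : (S' * D ^ V.card : ℕ) ≤ S' * D ^ (q*N+1) :=
      Nat.mul_le_mul_left _ (Nat.pow_le_pow_right hD hVcard)
    exact_mod_cast le_trans htle h2
  have hu1 : (D:ℝ)^N * c^L ≤ ε := by
    have hDN : ((D:ℝ))^N ≤ C0 := by
      rw [hC0def]
      have hS'1 : (1:ℝ) ≤ (S':ℝ) := by exact_mod_cast hS'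
      have hBc : (0:ℝ) ≤ B / (1-c) := by positivity
      calc ((D:ℝ))^N ≤ (D:ℝ)^(N+1) := pow_le_pow_right₀ hD1 (Nat.le_succ N)
      _ = 1 * 1 * (D:ℝ)^(N+1) := by ring
      _ ≤ (B / (1-c) + 1) * (S':ℝ) * (D:ℝ)^(N+1) := by
          have h1 : (1:ℝ)*1 ≤ (B / (1-c) + 1) * (S':ℝ) :=
            mul_le_mul (by linarith) hS'1 zero_le_one (by linarith)
          exact mul_le_mul_of_nonneg_right h1 (by positivity)
    calc (D:ℝ)^N * c^L ≤ C0 * c^L :=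
        mul_le_mul_of_nonneg_right hDN (pow_nonneg hc0.le L)
    _ ≤ C0 * (ε / C0) := mul_le_mul_of_nonneg_left hLc.le hC0pos.le
    _ = ε := by field_simp
  have hu01 : (0:ℝ) ≤ (D:ℝ)^N * c^L := by positivity
  have huq : ((D:ℝ)^N * c^L)^q ≤ (D:ℝ)^N * c^L :=
    pow_le_of_le_one hu01 (le_trans hu1 hε1) hq0.ne'
  have httau : (t:ℝ) * (B * c ^ K / (1 - c)) ≤ ε := by
    calc (t:ℝ) * (B * c ^ K / (1 - c))
        ≤ ((S':ℝ) * (D:ℝ)^(q*N+1)) * (B * c ^ K / (1 - c)) :=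
          mul_le_mul_of_nonneg_right htre hτ0
    _ = (B / (1-c)) * (S':ℝ) * (D:ℝ) * ((D:ℝ)^N * c^L)^q := by
        rw [hKdef, pow_mul c L q, pow_succ, mul_comm q N, pow_mul, mul_pow]
        ring
    _ ≤ (B / (1-c)) * (S':ℝ) * (D:ℝ) * ((D:ℝ)^N * c^L) := by
        apply mul_le_mul_of_nonneg_left huq (by positivity)
    _ = (B / (1-c)) * (S':ℝ) * (D:ℝ)^(N+1) * c^L := by ring
    _ ≤ (B / (1-c) + 1) * (S':ℝ) * (D:ℝ)^(N+1) * c^L := by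
        have h1 : B / (1-c) ≤ B / (1-c) + 1 := by linarith
        have h2 : B / (1-c) * (S':ℝ) ≤ (B / (1-c) + 1) * (S':ℝ) :=
          mul_le_mul_of_nonneg_right h1 (Nat.cast_nonneg S')
        have h3 : B / (1-c) * (S':ℝ) * (D:ℝ)^(N+1) ≤ (B / (1-c) + 1) * (S':ℝ) * (D:ℝ)^(N+1) :=
          mul_le_mul_of_nonneg_right h2 (by positivity)
        exact mul_le_mul_of_nonneg_right h3 (pow_nonneg hc0.le L)
    _ = C0 * c^L := by rw [hC0def]
    _ ≤ C0 * (ε / C0) := mul_le_mul_of_nonneg_left hLc.le hC0pos.le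
    _ = ε := by field_simp
  have hrearr : (t:ℝ) * Xser α b r x - z
      = (t:ℝ) * (Xser α b r x - YK x) + ((t:ℝ) * YK x - z) := by ring
  rw [hrearr]
  calc |(t:ℝ) * (Xser α b r x - YK x) + ((t:ℝ) * YK x - z)|
      ≤ |(t:ℝ) * (Xser α b r x - YK x)| + |(t:ℝ) * YK x - z| := abs_add_le _ _
  _ ≤ (t:ℝ) * (B * c ^ K / (1 - c)) + ε := by
      apply add_le_add
      · rw [abs_mul, abs_of_nonneg ht0]
        exact mul_le_mul_of_nonneg_left htail ht0
      · exact le_trans hz hDε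
  _ ≤ ε + ε := add_le_add httau (le_refl ε)
  _ = 2 * ε := by ring

end Core


/-- If the partial quotients of `α` are unbounded, then there are integers `t_n → ∞` with
`t_n X mod 1 → δ_0` in law; equivalently `P̂_X(m t_n) → 1` for every positive integer `m`. -/
theorem fourier_tendsto_one_of_unbounded_partial_quotients
    (α : ℝ) (hα : α ∈ Set.Ioo (0 : ℝ) 1) (hirr : Irrational α)
    (N : ℕ) [NeZero N] (d : Fin N → ℝ)
    (hd : StrictMono d) (hdmem : ∀ i, d i ∈ Set.Ico (0 : ℝ) 1)
    (b r : ℝ → ℝ) (hbper : Function.Periodic b 1) (hrper : Function.Periodic r 1)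
    (hr : ∀ x, r x ∈ Set.Ioo (0 : ℝ) 1)
    (hbconst : ∀ i : Fin N, ∀ x ∈ arc d i, ∀ y ∈ arc d i, b x = b y)
    (hrconst : ∀ i : Fin N, ∀ x ∈ arc d i, ∀ y ∈ arc d i, r x = r y)
    -- the sequence of partial quotients is unbounded
    (hunb : ∀ B : ℕ, ∃ n : ℕ, B < partQuot α n) :
    ∃ t : ℕ → ℕ, (∀ n, 0 < t n) ∧ Tendsto t atTop atTop ∧
      ∀ m : ℕ, 0 < m →
        Tendsto
          (fun n : ℕ => ∫ x : ℝ,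
            Complex.exp (2 * Real.pi * Complex.I * (m : ℂ) * (t n : ℂ) * x)
            ∂(Measure.map (Xser α b r) (volume.restrict (Set.Ico (0 : ℝ) 1))))
          atTop (𝓝 1) := by
  classical
  have hXm : Measurable (Xser α b r) := Xser_meas hd hdmem hbper hrper hr hbconst hrconst
  have hcore : ∀ n : ℕ, ∃ t : ℕ, (n+1) ≤ t ∧ 1 ≤ t ∧ ∃ E : Set ℝ, MeasurableSet E ∧
      volume E ≤ ENNReal.ofReal (1/(n+1)) ∧
      ∀ x ∈ Set.Ico (0:ℝ) 1 \ E, ∃ z : ℤ,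
        |(t:ℝ) * Xser α b r x - z| ≤ 2 * (1/(n+1)) := by
    intro n
    apply core hα hirr hd hdmem hbper hrper hr hbconst hrconst hunb
    · positivity
    · rw [div_le_one (by positivity)]
      have : (1:ℝ) ≤ n + 1 := by exact_mod_cast Nat.succ_le_succ (Nat.zero_le n)
      linarith
  choose t ht1 _ht2 E hEm hEv hEap using hcore
  have htmono : ∀ n : ℕ, (n + 1 : ℕ) ≤ t n := ht1
  refine ⟨t, fun n => lt_of_lt_of_le (Nat.succ_pos n) (htmono n), ?_, ?_⟩
  · exact tendsto_atTop_mono htmono (tendsto_add_atTop_nat 1)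
  · intro m hm
    set μ := volume.restrict (Set.Ico (0:ℝ) 1) with hμdef
    have hμuniv : μ Set.univ = 1 := by
      rw [hμdef, Measure.restrict_apply_univ, Real.volume_Ico]
      norm_num
    haveI : IsProbabilityMeasure μ := ⟨hμuniv⟩
    rw [tendsto_iff_norm_sub_tendsto_zero]
    set εn : ℕ → ℝ := fun n => 1/(n+1) with hεdef
    have hε0 : ∀ n, (0:ℝ) < εn n := by intro n; positivity
    set g : ℕ → ℝ := fun n => 2 * εn n + 2 * (2 * Real.pi * m * (2 * εn n)) with hgdef
    have hgto : Tendsto g atTop (𝓝 0) := by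
      have h1 : Tendsto εn atTop (𝓝 0) := tendsto_one_div_add_atTop_nhds_zero_nat
      have h2 : Tendsto (fun n => (2 + 8 * Real.pi * m) * εn n) atTop (𝓝 0) := by
        have := h1.const_mul (2 + 8 * Real.pi * (m:ℝ))
        simpa [hεdef] using this
      apply h2.congr
      intro n
      rw [hgdef]
      ring
    apply squeeze_zero' (f := fun n =>
      ‖(∫ x : ℝ, Complex.exp (2 * Real.pi * Complex.I * (m : ℂ) * (t n : ℂ) * x)
        ∂(Measure.map (Xser α b r) μ)) - 1‖) (g := g)
    · exact Eventually.of_forall fun n => norm_nonneg _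
    · -- eventual bound
      have hev : ∀ᶠ n : ℕ in atTop, 2 * Real.pi * (m:ℝ) * (2 * εn n) ≤ 1 := by
        have h1 : Tendsto (fun n : ℕ => 2 * Real.pi * (m:ℝ) * (2 * εn n)) atTop (𝓝 0) := by
          have h0 : Tendsto εn atTop (𝓝 0) := tendsto_one_div_add_atTop_nhds_zero_nat
          have h5 := h0.const_mul (4 * Real.pi * (m:ℝ))
          rw [mul_zero] at h5
          apply h5.congr
          intro k
          ring
        exact h1.eventually (eventually_le_nhds one_pos)
      filter_upwards [hev] with n hn
      set X := Xser α b r with hXdef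
      set C : ℂ := 2 * Real.pi * Complex.I * (m:ℂ) * (t n : ℂ) with hCdef
      set ρ : ℝ := 2 * (2 * Real.pi * (m:ℝ) * (2 * εn n)) with hρdef
      have hρ0 : 0 ≤ ρ := by rw [hρdef]; positivity
      have hfc : Continuous fun y : ℝ => Complex.exp (C * y) :=
        Complex.continuous_exp.comp (continuous_const.mul Complex.continuous_ofReal)
      have hmap : (∫ x : ℝ, Complex.exp (2 * Real.pi * Complex.I * (m : ℂ) * (t n : ℂ) * x)
          ∂(Measure.map X μ)) = ∫ x, Complex.exp (C * (X x)) ∂μ :=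
        integral_map hXm.aemeasurable hfc.aestronglyMeasurable
      have hCx : ∀ y : ℝ, C * (y:ℂ) = ((2 * Real.pi * ((m:ℝ) * ((t n:ℝ) * y)) : ℝ) : ℂ) * Complex.I := by
        intro y; rw [hCdef]; push_cast; ring
      have hint : Integrable (fun x => Complex.exp (C * (X x))) μ := by
        apply Integrable.mono' (integrable_const (1:ℝ))
        · exact ((hfc.measurable).comp hXm).aestronglyMeasurable
        · apply Eventually.of_forall; intro x
          rw [hCx, Complex.norm_exp_ofReal_mul_I]
      have hb2 : ∀ x : ℝ, ‖Complex.exp (C * (X x)) - 1‖ ≤ 2 := by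
        intro x
        calc ‖Complex.exp (C * (X x)) - 1‖
            ≤ ‖Complex.exp (C * (X x))‖ + ‖(1:ℂ)‖ := norm_sub_le _ _
        _ ≤ 2 := by rw [hCx, Complex.norm_exp_ofReal_mul_I]; norm_num
      rw [hmap]
      have hsub : (∫ x, Complex.exp (C * (X x)) ∂μ) - 1
          = ∫ x, (Complex.exp (C * (X x)) - 1) ∂μ := by
        rw [integral_sub hint (integrable_const 1)]
        simp
      rw [hsub]
      set G : ℝ → ℝ := fun x => Set.indicator (E n) (fun _ => (2:ℝ)) x + ρ with hGdef
      have hGint : Integrable G μ :=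
        ((integrable_const (2:ℝ)).indicator (hEm n)).add (integrable_const ρ)
      have hptwise : ∀ᵐ x ∂μ, ‖Complex.exp (C * (X x)) - 1‖ ≤ G x := by
        have hae : ∀ᵐ x ∂μ, x ∈ Set.Ico (0:ℝ) 1 :=
          ae_restrict_mem measurableSet_Ico
        filter_upwards [hae] with x hx
        by_cases hxE : x ∈ E n
        · have h2 : G x = 2 + ρ := by
            rw [hGdef]
            simp [Set.indicator_of_mem hxE]
          rw [h2]
          linarith [hb2 x]
        · obtain ⟨z, hz⟩ := hEap n x ⟨hx, hxE⟩
          set ψ : ℝ := 2 * Real.pi * ((m:ℝ) * ((t n:ℝ) * X x - z)) with hψdef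
          have hres : Complex.exp (C * (X x)) = Complex.exp ((ψ:ℂ) * Complex.I) := by
            rw [hCx]
            have hsplit2 : ((2 * Real.pi * ((m:ℝ) * ((t n:ℝ) * X x)) : ℝ) : ℂ) * Complex.I
                = (ψ:ℂ) * Complex.I + ((m:ℤ) * z : ℤ) * (2 * Real.pi * Complex.I) := by
              rw [hψdef]; push_cast; ring
            rw [hsplit2, Complex.exp_add, Complex.exp_int_mul_two_pi_mul_I, mul_one]
          have hψle : |ψ| ≤ 2 * Real.pi * (m:ℝ) * (2 * εn n) := by
            rw [hψdef]
            have hm0 : (0:ℝ) ≤ (m:ℝ) := Nat.cast_nonneg m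
            have hπ0 : (0:ℝ) ≤ 2 * Real.pi := by positivity
            rw [abs_mul, abs_of_nonneg hπ0, abs_mul, abs_of_nonneg hm0]
            have := hz
            calc 2 * Real.pi * ((m:ℝ) * |(t n:ℝ) * X x - z|)
                ≤ 2 * Real.pi * ((m:ℝ) * (2 * εn n)) := by
                  apply mul_le_mul_of_nonneg_left _ hπ0
                  exact mul_le_mul_of_nonneg_left hz hm0
            _ = 2 * Real.pi * (m:ℝ) * (2 * εn n) := by ring
          have habs1 : ‖(ψ:ℂ) * Complex.I‖ ≤ 1 := by
            rw [norm_mul, Complex.norm_I, Complex.norm_real, Real.norm_eq_abs, mul_one]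
            exact le_trans hψle hn
          have hexp1 : ‖Complex.exp ((ψ:ℂ) * Complex.I) - 1‖ ≤ ρ := by
            have h3 := Complex.norm_exp_sub_one_le habs1
            rw [norm_mul, Complex.norm_I, Complex.norm_real, Real.norm_eq_abs, mul_one] at h3
            calc ‖Complex.exp ((ψ:ℂ) * Complex.I) - 1‖ ≤ 2 * |ψ| := h3
            _ ≤ ρ := by rw [hρdef]; linarith [hψle]
          have hind : (0:ℝ) ≤ Set.indicator (E n) (fun _ => (2:ℝ)) x :=
            Set.indicator_nonneg (fun _ _ => by norm_num) x
          rw [hres, hGdef]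
          have : ‖Complex.exp ((ψ:ℂ) * Complex.I) - 1‖ ≤ ρ := hexp1
          simp only []
          linarith
      calc ‖∫ x, (Complex.exp (C * (X x)) - 1) ∂μ‖
          ≤ ∫ x, ‖Complex.exp (C * (X x)) - 1‖ ∂μ := norm_integral_le_integral_norm _
      _ ≤ ∫ x, G x ∂μ := by
          apply integral_mono_ae ((hint.sub (integrable_const 1)).norm) hGint hptwise
      _ = (μ (E n)).toReal * 2 + ρ := by
          rw [hGdef, integral_add ((integrable_const (2:ℝ)).indicator (hEm n))
            (integrable_const ρ)]
          rw [integral_indicator_const _ (hEm n), integral_const]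
          simp [hμuniv, smul_eq_mul, mul_comm]
          rfl
      _ ≤ g n := by
          have h1 : μ (E n) ≤ ENNReal.ofReal (εn n) := by
            rw [hμdef]
            calc (volume.restrict (Set.Ico (0:ℝ) 1)) (E n) ≤ volume (E n) :=
                Measure.restrict_le_self _
            _ ≤ ENNReal.ofReal (1/(n+1)) := hEv n
          have h2 : (μ (E n)).toReal ≤ εn n := by
            calc (μ (E n)).toReal ≤ (ENNReal.ofReal (εn n)).toReal :=
                ENNReal.toReal_mono (by simp) h1
            _ = εn n := ENNReal.toReal_ofReal (hε0 n).le
          have hgn : g n = 2 * εn n + 2 * (2 * Real.pi * (m:ℝ) * (2 * εn n)) := rfl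
          rw [hgn, hρdef]
          linarith [h2]
    · exact hgto
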